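/- Let M, N, K be positive integers with K ≥ 2 and N ≥ (K+1)M−1. Then for every real r with 0 ≤ r ≤ M, the supremum over tuples (D_1,…,D_K) of reals with 0 ≤ D_i ≤ M for each i and D_1+⋯+D_K ≤ min(N,KM), of the minimum over nonempty subsets A ⊆ {1,…,K} of d^{D_A}_{|A|M,N}(|A|·r) (where D_A = Σ_{a∈A} D_a), equals d^{FC}_{M,N}(r). -/

import Mathlib

set_option maxHeartbeats 1000000


/-- The index `l` of the interval of average dimensions per channel use `D`
to which `D` belongs: the smallest `l` with `D ≤ (MN − l(l+1))/(N+M−1−2l)`. -/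
noncomputable def lIdx (M N : ℕ) (D : ℝ) : ℕ :=
  sInf {l : ℕ |
    D ≤ ((M : ℝ) * (N : ℝ) - (l : ℝ) * ((l : ℝ) + 1)) /
        ((N : ℝ) + (M : ℝ) - 1 - 2 * (l : ℝ))}

/-- The upper bound `d^{D}_{M,N}(r)` on the DMT of infinite constellations with
`D` average dimensions per channel use, in a point-to-point channel with `M`
transmit and `N` receive antennas.  It vanishes for `r ≥ D` or `D = 0`, and for
`0 ≤ r < D` it is the straight line `((M−l)(N−l)/(D−l))·(D−r)` where `l = lIdx M N D`
is determined by the interval of `D`. -/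
noncomputable def dIC (M N : ℕ) (D r : ℝ) : ℝ :=
  if D ≤ 0 ∨ D ≤ r then 0
  else
    (((M : ℝ) - (lIdx M N D : ℝ)) * ((N : ℝ) - (lIdx M N D : ℝ)) /
        (D - (lIdx M N D : ℝ))) * (D - r)

/-- The optimal point-to-point DMT `d^{FC}_{M,N}(r)` of finite constellations:
the piecewise linear function through the points `(l, (M−l)(N−l))`. -/
noncomputable def dFC (M N : ℕ) (r : ℝ) : ℝ :=
  ((M : ℝ) - (⌊r⌋ : ℝ)) * ((N : ℝ) - (⌊r⌋ : ℝ))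
    + (r - (⌊r⌋ : ℝ)) *
      (((M : ℝ) - (⌊r⌋ : ℝ) - 1) * ((N : ℝ) - (⌊r⌋ : ℝ) - 1)
        - ((M : ℝ) - (⌊r⌋ : ℝ)) * ((N : ℝ) - (⌊r⌋ : ℝ)))

/-- The optimal symmetric multiple-access DMT `d^{FC}_{K,M,N}(r)` of finite
constellations: it equals `d^{FC}_{M,N}(r)` for `r ≤ min(N/(K+1), M)` and
`d^{FC}_{KM,N}(K·r)` afterwards. -/
noncomputable def dFCmac (K M N : ℕ) (r : ℝ) : ℝ :=
  if r ≤ min ((N : ℝ) / ((K : ℝ) + 1)) (M : ℝ) then dFC M N r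
  else dFC (K * M) N ((K : ℝ) * r)


lemma dFC_eq_line (M N : ℕ) (r : ℝ) :
    dFC M N r = (M:ℝ)*N - (⌊r⌋:ℝ)*((⌊r⌋:ℝ)+1) - ((M:ℝ)+N-1-2*(⌊r⌋:ℝ))*r := by
  simp only [dFC]; ring

lemma dFC_ge_A (M N j : ℕ) (r : ℝ) (hjr : (j:ℝ) ≤ r) :
    (M:ℝ)*N - (j:ℝ)*((j:ℝ)+1) - ((M:ℝ)+N-1-2*(j:ℝ))*r ≤ dFC M N r := by
  have h1 : ((⌊r⌋:ℤ):ℝ) ≤ r := Int.floor_le r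
  have h2 : r < ((⌊r⌋:ℤ):ℝ) + 1 := Int.lt_floor_add_one r
  have hfl : (j:ℤ) ≤ ⌊r⌋ := Int.le_floor.mpr (by exact_mod_cast hjr)
  rw [dFC_eq_line M N r]
  rcases eq_or_lt_of_le hfl with h | h
  · exact le_of_eq (by rw [← h]; push_cast; ring)
  · have h3 : (j:ℝ) + 1 ≤ ((⌊r⌋:ℤ):ℝ) := by exact_mod_cast h
    have hA : (0:ℝ) ≤ ((⌊r⌋:ℤ):ℝ) - j := by linarith
    have hB : (0:ℝ) ≤ 2*r - ((⌊r⌋:ℤ):ℝ) - j - 1 := by linarith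
    nlinarith [mul_nonneg hA hB]

lemma dFC_ge_B (M N j : ℕ) (r : ℝ) (hr0 : 0 ≤ r) (hrj : r ≤ (j:ℝ)) :
    (M:ℝ)*N - ((j:ℝ)-1)*(j:ℝ) - ((M:ℝ)+N+1-2*(j:ℝ))*r ≤ dFC M N r := by
  have h1 : ((⌊r⌋:ℤ):ℝ) ≤ r := Int.floor_le r
  have h2 : r < ((⌊r⌋:ℤ):ℝ) + 1 := Int.lt_floor_add_one r
  have hfl : ⌊r⌋ ≤ (j:ℤ) := by exact_mod_cast le_trans h1 hrj
  rw [dFC_eq_line M N r]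
  rcases eq_or_lt_of_le hfl with h | h
  · have hlj : ((⌊r⌋:ℤ):ℝ) = (j:ℝ) := by exact_mod_cast h
    have hrjeq : r = (j:ℝ) := le_antisymm hrj (by rw [← hlj]; exact h1)
    exact le_of_eq (by rw [hlj, hrjeq]; ring)
  · have h3 : ((⌊r⌋:ℤ):ℝ) + 1 ≤ (j:ℝ) := by exact_mod_cast h
    have key : 0 ≤ ((j:ℝ) - 1 - ((⌊r⌋:ℤ):ℝ))*(((⌊r⌋:ℤ):ℝ) + (j:ℝ) - 2*r) := by
      rcases eq_or_lt_of_le h3 with h4 | h4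
      · have hz : (j:ℝ) - 1 - ((⌊r⌋:ℤ):ℝ) = 0 := by linarith
        rw [hz, zero_mul]
      · have h5 : ((⌊r⌋:ℤ):ℝ) + 2 ≤ (j:ℝ) := by
          have h6 : ⌊r⌋ + 1 < (j:ℤ) := by exact_mod_cast h4
          have h7 : ⌊r⌋ + 2 ≤ (j:ℤ) := by omega
          exact_mod_cast h7
        apply mul_nonneg <;> linarith
    nlinarith [key]

lemma dFC_nonneg (M N : ℕ) (hMN : M ≤ N) (r : ℝ) (hr0 : 0 ≤ r) (hrM : r ≤ (M:ℝ)) :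
    0 ≤ dFC M N r := by
  have h1 : ((⌊r⌋:ℤ):ℝ) ≤ r := Int.floor_le r
  have h2 : r < ((⌊r⌋:ℤ):ℝ) + 1 := Int.lt_floor_add_one r
  have hl0 : (0:ℝ) ≤ ((⌊r⌋:ℤ):ℝ) := by exact_mod_cast Int.floor_nonneg.mpr hr0
  have hlM : ⌊r⌋ ≤ (M:ℤ) := by exact_mod_cast le_trans h1 hrM
  have hMN' : (M:ℝ) ≤ N := by exact_mod_cast hMN
  simp only [dFC]
  rcases eq_or_lt_of_le hlM with h | h
  · have hre : ((⌊r⌋:ℤ):ℝ) = (M:ℝ) := by exact_mod_cast h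
    have hrM' : r = (M:ℝ) := le_antisymm hrM (by rw [← hre]; exact h1)
    rw [hre, hrM']; ring_nf
    exact le_refl 0
  · have h3 : ((⌊r⌋:ℤ):ℝ) + 1 ≤ (M:ℝ) := by exact_mod_cast h
    nlinarith [mul_nonneg (mul_nonneg (by linarith : (0:ℝ) ≤ (M:ℝ) - ((⌊r⌋:ℤ):ℝ))
        (by linarith : (0:ℝ) ≤ (N:ℝ) - ((⌊r⌋:ℤ):ℝ))) (by linarith : (0:ℝ) ≤ 1 - (r - ((⌊r⌋:ℤ):ℝ))),
      mul_nonneg (mul_nonneg (by linarith : (0:ℝ) ≤ (M:ℝ) - ((⌊r⌋:ℤ):ℝ) - 1)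
        (by linarith : (0:ℝ) ≤ (N:ℝ) - ((⌊r⌋:ℤ):ℝ) - 1)) (by linarith : (0:ℝ) ≤ r - ((⌊r⌋:ℤ):ℝ))]

lemma dIC_le_dFC (M N : ℕ) (hM : 0 < M) (hMN : M ≤ N) (D r : ℝ)
    (hDM : D ≤ (M:ℝ)) (hr0 : 0 ≤ r) (hrM : r ≤ (M:ℝ)) :
    dIC M N D r ≤ dFC M N r := by
  rw [dIC]
  split_ifs with h
  · exact dFC_nonneg M N hMN r hr0 hrM
  push_neg at h
  obtain ⟨hD0, hDr⟩ := h
  have hMN' : (M:ℝ) ≤ N := by exact_mod_cast hMN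
  have hM1 : (1:ℝ) ≤ M := by exact_mod_cast hM
  set s : Set ℕ := {l : ℕ |
    D ≤ ((M : ℝ) * (N : ℝ) - (l : ℝ) * ((l : ℝ) + 1)) /
        ((N : ℝ) + (M : ℝ) - 1 - 2 * (l : ℝ))} with hs
  have hM1s : M - 1 ∈ s := by
    have hc : ((M-1:ℕ):ℝ) = (M:ℝ) - 1 := Nat.cast_pred hM
    have hden : (0:ℝ) < (N:ℝ) + M - 1 - 2*((M:ℝ)-1) := by linarith
    have hval : ((M:ℝ)*N - ((M:ℝ)-1)*(((M:ℝ)-1)+1))/((N:ℝ)+(M:ℝ)-1-2*((M:ℝ)-1)) = (M:ℝ) := by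
      rw [div_eq_iff (ne_of_gt hden)]; ring
    show D ≤ _
    rw [hc, hval]
    exact hDM
  have hsne : s.Nonempty := ⟨M-1, hM1s⟩
  have hjdef : lIdx M N D = sInf s := rfl
  set j := lIdx M N D with hjd
  have hjmem : j ∈ s := hjdef ▸ Nat.sInf_mem hsne
  have hjle : j ≤ M - 1 := hjdef ▸ Nat.sInf_le hM1s
  have hjM : (j:ℝ) ≤ (M:ℝ) - 1 := by
    have h5 := (Nat.cast_le (α := ℝ)).mpr hjle
    rwa [Nat.cast_pred hM] at h5
  have hδ : (0:ℝ) < (N:ℝ)+M-1-2*(j:ℝ) := by linarith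
  have key1 : D*((N:ℝ)+M-1-2*(j:ℝ)) ≤ (M:ℝ)*N - (j:ℝ)*((j:ℝ)+1) := by
    have h5 : D ≤ ((M:ℝ)*N - (j:ℝ)*((j:ℝ)+1))/((N:ℝ)+(M:ℝ)-1-2*(j:ℝ)) := hjmem
    rwa [le_div_iff₀ hδ] at h5
  have hkey2 : 1 ≤ j → (M:ℝ)*N - ((j:ℝ)-1)*(j:ℝ) < D*((N:ℝ)+M+1-2*(j:ℝ)) := by
    intro hj1
    have hnot : j - 1 ∉ s := by
      apply Nat.notMem_of_lt_sInf
      rw [← hjdef]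
      omega
    have hc : ((j-1:ℕ):ℝ) = (j:ℝ) - 1 := Nat.cast_pred hj1
    have hδ' : (0:ℝ) < (N:ℝ)+(M:ℝ)-1-2*((j:ℝ)-1) := by linarith
    have h5 : ¬ (D ≤ ((M:ℝ)*N - ((j:ℝ)-1)*(((j:ℝ)-1)+1))/((N:ℝ)+(M:ℝ)-1-2*((j:ℝ)-1))) := by
      intro hcon
      exact hnot (by show D ≤ _; rw [hc]; exact hcon)
    have h6 := not_le.mp h5
    rw [div_lt_iff₀ hδ'] at h6
    nlinarith [h6]
  have hjD : (j:ℝ) < D := by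
    rcases Nat.eq_zero_or_pos j with h0 | h1
    · rw [h0]; simpa using hD0
    · have h2 := hkey2 h1
      have hδ'pos : (0:ℝ) < (N:ℝ)+M+1-2*(j:ℝ) := by linarith
      have hfact : (j:ℝ)*((N:ℝ)+M+1-2*(j:ℝ)) ≤ (M:ℝ)*N - ((j:ℝ)-1)*(j:ℝ) := by
        nlinarith [mul_nonneg (by linarith : (0:ℝ) ≤ (M:ℝ)-(j:ℝ)) (by linarith : (0:ℝ) ≤ (N:ℝ)-(j:ℝ))]
      have h7 : (j:ℝ)*((N:ℝ)+M+1-2*(j:ℝ)) < D*((N:ℝ)+M+1-2*(j:ℝ)) := by linarith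
      exact lt_of_mul_lt_mul_right h7 (le_of_lt hδ'pos)
  rw [div_mul_eq_mul_div, div_le_iff₀ (by linarith : (0:ℝ) < D - (j:ℝ))]
  rcases le_or_gt (j:ℝ) r with hrj | hrj
  · have hA := dFC_ge_A M N j r hrj
    have hbr : (D - (j:ℝ))*((N:ℝ)+M-1-2*(j:ℝ)) ≤ ((M:ℝ)-(j:ℝ))*((N:ℝ)-(j:ℝ)) := by
      nlinarith [key1]
    nlinarith [mul_nonneg (sub_nonneg.mpr hA) (by linarith : (0:ℝ) ≤ D - (j:ℝ)),
      mul_nonneg (by linarith : (0:ℝ) ≤ r - (j:ℝ)) (sub_nonneg.mpr hbr)]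
  · have hj1 : 1 ≤ j := by
      by_contra hcon
      push_neg at hcon
      interval_cases j
      · simp at hrj; linarith
    have h2 := hkey2 hj1
    have hB := dFC_ge_B M N j r hr0 (le_of_lt hrj)
    have hbr2 : ((M:ℝ)-(j:ℝ))*((N:ℝ)-(j:ℝ)) ≤ (D - (j:ℝ))*((N:ℝ)+M+1-2*(j:ℝ)) := by
      nlinarith [h2, sq_nonneg ((j:ℝ))]
    nlinarith [mul_nonneg (sub_nonneg.mpr hB) (by linarith : (0:ℝ) ≤ D - (j:ℝ)),
      mul_nonneg (by linarith : (0:ℝ) ≤ (j:ℝ) - r) (sub_nonneg.mpr hbr2)]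

lemma key_low (M N K k l : ℕ) (hM : 0 < M) (hk1 : 1 ≤ k) (hkK : k ≤ K) (hK2 : 2 ≤ K)
    (hlM : l + 1 ≤ M) (hKMN : ((K:ℝ)+1)*(M:ℝ) ≤ (N:ℝ)+1)
    (r : ℝ) (hlr : (l:ℝ) ≤ r) (hrl : r < (l:ℝ)+1) :
    dFC M N r ≤ dIC (k*M) N
      ((k:ℝ) * (((M:ℝ)*(N:ℝ) - (l:ℝ)*((l:ℝ)+1))/((N:ℝ)+(M:ℝ)-1-2*(l:ℝ))))
      ((k:ℝ)*r) := by
  obtain ⟨k', rfl⟩ : ∃ k', k = k' + 1 := ⟨k - 1, by omega⟩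
  have hM1 : (1:ℝ) ≤ M := by exact_mod_cast hM
  have hK2r : (2:ℝ) ≤ K := by exact_mod_cast hK2
  have hkKr : (k':ℝ) + 1 ≤ K := by exact_mod_cast hkK
  have hk'0 : (0:ℝ) ≤ k' := Nat.cast_nonneg k'
  have hlMr : (l:ℝ) + 1 ≤ M := by exact_mod_cast hlM
  have hl0 : (0:ℝ) ≤ l := Nat.cast_nonneg l
  have hMN : (M:ℝ) ≤ N := by nlinarith
  set d₁ : ℝ := (N:ℝ)+(M:ℝ)-1-2*(l:ℝ) with hd₁
  have hd₁pos : 0 < d₁ := by rw [hd₁]; linarith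
  set Dst : ℝ := ((M:ℝ)*(N:ℝ) - (l:ℝ)*((l:ℝ)+1))/d₁ with hDst
  have hDd : Dst * d₁ = (M:ℝ)*(N:ℝ) - (l:ℝ)*((l:ℝ)+1) :=
    div_mul_cancel₀ _ (ne_of_gt hd₁pos)
  have hl1 : (l:ℝ) + 1 ≤ Dst := by
    rw [hDst, le_div_iff₀ hd₁pos]
    nlinarith [mul_nonneg (by linarith : (0:ℝ) ≤ (M:ℝ)-(l:ℝ)-1) (by linarith : (0:ℝ) ≤ (N:ℝ)-(l:ℝ)-1)]
  have hDM : Dst ≤ (M:ℝ) := by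
    rw [hDst, div_le_iff₀ hd₁pos]
    nlinarith [mul_nonneg (by linarith : (0:ℝ) ≤ (M:ℝ)-(l:ℝ)-1) (by linarith : (0:ℝ) ≤ (M:ℝ)-(l:ℝ))]
  have hrD : r < Dst := lt_of_lt_of_le hrl hl1
  have hDstpos : 0 < Dst := by linarith
  clear_value d₁ Dst
  have hfloor : ⌊r⌋ = (l:ℤ) := by
    rw [Int.floor_eq_iff]
    exact ⟨by exact_mod_cast hlr, by push_cast; exact hrl⟩
  have hdFC : dFC M N r = d₁ * (Dst - r) := by
    rw [dFC_eq_line M N r, hfloor, mul_sub, mul_comm d₁ Dst, hDd, hd₁]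
    push_cast; ring
  have hcond : ¬ (((k'+1:ℕ):ℝ) * Dst ≤ 0 ∨ ((k'+1:ℕ):ℝ) * Dst ≤ ((k'+1:ℕ):ℝ)*r) := by
    push_neg
    have hkp : (0:ℝ) < ((k'+1:ℕ):ℝ) := by positivity
    exact ⟨mul_pos hkp hDstpos, by apply mul_lt_mul_of_pos_left hrD hkp⟩
  rw [dIC, if_neg hcond]
  push_cast
  -- after push_cast the D argument is ((k':ℝ)+1) * Dst
  set Db : ℝ := ((k':ℝ)+1) * Dst with hDb
  set cM : ℕ := (k'+1)*M with hcM
  have hcMr : ((cM:ℕ):ℝ) = ((k':ℝ)+1)*(M:ℝ) := by rw [hcM]; push_cast; ring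
  clear_value Db cM
  set s : Set ℕ := {j : ℕ |
    Db ≤ ((cM : ℝ) * (N : ℝ) - (j : ℝ) * ((j : ℝ) + 1)) /
        ((N : ℝ) + (cM : ℝ) - 1 - 2 * (j : ℝ))} with hs
  have hjdef : lIdx cM N Db = sInf s := rfl
  clear_value s
  -- the candidate index j₀ = k'*M + l
  have hfac : (0:ℝ) ≤ (N:ℝ) - 1 - 2*(l:ℝ) - (k':ℝ)*(M:ℝ) := by
    nlinarith [mul_nonneg (by linarith : (0:ℝ) ≤ (K:ℝ)-1-(k':ℝ)) (by linarith : (0:ℝ) ≤ (M:ℝ))]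
  have hj₀r : (((k'*M+l : ℕ)):ℝ) = (k':ℝ)*(M:ℝ) + (l:ℝ) := by push_cast; ring
  have hδ₀pos : (0:ℝ) < (N:ℝ) + (cM:ℝ) - 1 - 2*(((k'*M+l : ℕ)):ℝ) := by
    rw [hcMr, hj₀r]; nlinarith
  have hmem0 : k'*M+l ∈ s := by
    rw [hs]
    show Db ≤ _
    rw [le_div_iff₀ hδ₀pos, hDb, hcMr, hj₀r]
    have hprod : (0:ℝ) ≤ (k':ℝ)*(((M:ℝ)-(l:ℝ))*((M:ℝ)-(l:ℝ)-1))*((N:ℝ)-1-2*(l:ℝ)-(k':ℝ)*(M:ℝ)) :=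
      mul_nonneg (mul_nonneg hk'0 (mul_nonneg (by linarith) (by linarith))) hfac
    have hmain : ((k':ℝ)+1)*((M:ℝ)*(N:ℝ) - (l:ℝ)*((l:ℝ)+1))*((N:ℝ) + ((k':ℝ)+1)*(M:ℝ) - 1 - 2*((k':ℝ)*(M:ℝ)+(l:ℝ)))
        ≤ (((k':ℝ)+1)*(M:ℝ)*(N:ℝ) - ((k':ℝ)*(M:ℝ)+(l:ℝ))*(((k':ℝ)*(M:ℝ)+(l:ℝ))+1))*d₁ := by
      rw [hd₁]; nlinarith [hprod]
    rw [← mul_le_mul_iff_of_pos_right hd₁pos]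
    have hDd3 : ((k':ℝ)+1)*Dst*((N:ℝ) + ((k':ℝ)+1)*(M:ℝ) - 1 - 2*((k':ℝ)*(M:ℝ)+(l:ℝ)))*d₁
        = ((k':ℝ)+1)*((M:ℝ)*(N:ℝ) - (l:ℝ)*((l:ℝ)+1))*((N:ℝ) + ((k':ℝ)+1)*(M:ℝ) - 1 - 2*((k':ℝ)*(M:ℝ)+(l:ℝ))) := by
      rw [show ((k':ℝ)+1)*Dst*((N:ℝ) + ((k':ℝ)+1)*(M:ℝ) - 1 - 2*((k':ℝ)*(M:ℝ)+(l:ℝ)))*d₁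
        = ((k':ℝ)+1)*((N:ℝ) + ((k':ℝ)+1)*(M:ℝ) - 1 - 2*((k':ℝ)*(M:ℝ)+(l:ℝ)))*(Dst*d₁) from by ring, hDd]
      ring
    rw [hDd3]
    exact hmain
  have hjle : lIdx cM N Db ≤ k'*M+l := hjdef ▸ Nat.sInf_le hmem0
  have hjmem : lIdx cM N Db ∈ s := hjdef ▸ Nat.sInf_mem ⟨_, hmem0⟩
  set j : ℕ := lIdx cM N Db with hj
  clear_value j
  have hjr : (j:ℝ) ≤ (k':ℝ)*(M:ℝ) + (l:ℝ) := by
    rw [← hj₀r]; exact_mod_cast hjle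
  have hδjpos : (0:ℝ) < (N:ℝ) + (cM:ℝ) - 1 - 2*(j:ℝ) := by
    rw [hcMr]; nlinarith
  have key1 : Db * ((N:ℝ) + (cM:ℝ) - 1 - 2*(j:ℝ)) ≤ (cM:ℝ)*(N:ℝ) - (j:ℝ)*((j:ℝ)+1) := by
    have h5 : Db ≤ ((cM : ℝ) * (N : ℝ) - (j : ℝ) * ((j : ℝ) + 1)) /
        ((N : ℝ) + (cM : ℝ) - 1 - 2 * (j : ℝ)) := by
      have h6 := hjmem
      rw [hs] at h6
      exact h6
    rwa [le_div_iff₀ hδjpos] at h5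
  -- j < Db
  have hfac2 : (0:ℝ) < (N:ℝ) - (l:ℝ) - (k':ℝ)*((M:ℝ)-1-(l:ℝ)) := by
    nlinarith [mul_le_mul_of_nonneg_right (by linarith : (k':ℝ) ≤ (K:ℝ)-1) (by linarith : (0:ℝ) ≤ (M:ℝ)-1-(l:ℝ)),
      mul_nonneg (by linarith : (0:ℝ) ≤ (K:ℝ)-2) hl0]
  have hpoly : ((k':ℝ)*(M:ℝ)+(l:ℝ))*d₁ < ((k':ℝ)+1)*((M:ℝ)*(N:ℝ) - (l:ℝ)*((l:ℝ)+1)) := by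
    rw [hd₁]
    nlinarith [mul_pos (by linarith : (0:ℝ) < (M:ℝ)-(l:ℝ)) hfac2]
  have hDd4 : Db*d₁ = ((k':ℝ)+1)*((M:ℝ)*(N:ℝ) - (l:ℝ)*((l:ℝ)+1)) := by
    rw [hDb, mul_assoc, hDd]
  have hjD : (j:ℝ) < Db := by
    have h8 : ((k':ℝ)*(M:ℝ)+(l:ℝ))*d₁ < Db*d₁ := by rw [hDd4]; exact hpoly
    have h9 := lt_of_mul_lt_mul_right h8 (le_of_lt hd₁pos)
    linarith [hjr]
  have hbr : (Db - (j:ℝ))*((N:ℝ) + (cM:ℝ) - 1 - 2*(j:ℝ)) ≤ ((cM:ℝ)-(j:ℝ))*((N:ℝ)-(j:ℝ)) := by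
    nlinarith [key1]
  -- final chain
  rw [hdFC, div_mul_eq_mul_div, le_div_iff₀ (by linarith : (0:ℝ) < Db - (j:ℝ))]
  have hd1j : d₁ ≤ ((k':ℝ)+1)*((N:ℝ) + (cM:ℝ) - 1 - 2*(j:ℝ)) := by
    have e1 : d₁ ≤ ((k':ℝ)+1)*((N:ℝ) + ((k':ℝ)+1)*(M:ℝ) - 1 - 2*((k':ℝ)*(M:ℝ)+(l:ℝ))) := by
      rw [hd₁]; nlinarith [mul_nonneg hk'0 hfac]
    have e2 : ((N:ℝ) + ((k':ℝ)+1)*(M:ℝ) - 1 - 2*((k':ℝ)*(M:ℝ)+(l:ℝ)))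
        ≤ ((N:ℝ) + ((k':ℝ)+1)*(M:ℝ) - 1 - 2*(j:ℝ)) := by linarith [hjr]
    rw [hcMr]
    exact le_trans e1 (mul_le_mul_of_nonneg_left e2 (by linarith))
  have hP : (0:ℝ) ≤ (Dst - r)*(Db - (j:ℝ)) := mul_nonneg (by linarith) (by linarith)
  have hQ : (0:ℝ) ≤ Db - ((k':ℝ)+1)*r := by
    rw [hDb]
    have h10 := mul_le_mul_of_nonneg_left (le_of_lt hrD) (by linarith : (0:ℝ) ≤ (k':ℝ)+1)
    linarith
  calc d₁ * (Dst - r) * (Db - (j:ℝ))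
      = d₁ * ((Dst - r)*(Db - (j:ℝ))) := by ring
    _ ≤ (((k':ℝ)+1)*((N:ℝ) + (cM:ℝ) - 1 - 2*(j:ℝ))) * ((Dst - r)*(Db - (j:ℝ))) :=
        mul_le_mul_of_nonneg_right hd1j hP
    _ = ((Db - (j:ℝ))*((N:ℝ) + (cM:ℝ) - 1 - 2*(j:ℝ))) * (Db - ((k':ℝ)+1)*r) := by
        rw [hDb]; ring
    _ ≤ (((cM:ℝ)-(j:ℝ))*((N:ℝ)-(j:ℝ))) * (Db - ((k':ℝ)+1)*r) :=
        mul_le_mul_of_nonneg_right hbr hQ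
    _ = (((k':ℝ)+1)*(M:ℝ)-(j:ℝ))*((N:ℝ)-(j:ℝ)) * (Db - ((k':ℝ)+1)*r) := by rw [hcMr]

theorem stmt7 (M N K : ℕ) (hM : 0 < M) (hN : 0 < N) (hK : 2 ≤ K)
    (hNK : (K + 1) * M - 1 ≤ N)
    (r : ℝ) (hr0 : 0 ≤ r) (hrM : r ≤ (M : ℝ)) :
    sSup {x : ℝ | ∃ D : Fin K → ℝ,
        (∀ i, 0 ≤ D i ∧ D i ≤ (M : ℝ)) ∧
        (∑ i, D i) ≤ min (N : ℝ) ((K : ℝ) * (M : ℝ)) ∧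
        x = sInf {y : ℝ | ∃ A : Finset (Fin K), A.Nonempty ∧
              y = dIC (A.card * M) N (∑ a ∈ A, D a) ((A.card : ℝ) * r)}}
      = dFC M N r := by
  have hK0 : 0 < K := by omega
  have hKN : (K+1)*M ≤ N + 1 := by omega
  have hMN : M ≤ N := by nlinarith
  have hKM : K*M ≤ N := by nlinarith
  have hKMNr : ((K:ℝ)+1)*(M:ℝ) ≤ (N:ℝ)+1 := by exact_mod_cast hKN
  have hKMr : ((K:ℝ))*(M:ℝ) ≤ (N:ℝ) := by exact_mod_cast hKM
  set i0 : Fin K := ⟨0, hK0⟩ with hi0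
  -- upper bound
  have hub : ∀ x ∈ {x : ℝ | ∃ D : Fin K → ℝ,
        (∀ i, 0 ≤ D i ∧ D i ≤ (M : ℝ)) ∧
        (∑ i, D i) ≤ min (N : ℝ) ((K : ℝ) * (M : ℝ)) ∧
        x = sInf {y : ℝ | ∃ A : Finset (Fin K), A.Nonempty ∧
              y = dIC (A.card * M) N (∑ a ∈ A, D a) ((A.card : ℝ) * r)}},
      x ≤ dFC M N r := by
    rintro x ⟨D, hD, hsum, rfl⟩
    have hbdd : BddBelow {y : ℝ | ∃ A : Finset (Fin K), A.Nonempty ∧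
        y = dIC (A.card * M) N (∑ a ∈ A, D a) ((A.card : ℝ) * r)} := by
      apply Set.Finite.bddBelow
      apply Set.Finite.subset (Set.finite_range
        (fun A : Finset (Fin K) => dIC (A.card * M) N (∑ a ∈ A, D a) ((A.card : ℝ) * r)))
      rintro y ⟨A, -, rfl⟩
      exact ⟨A, rfl⟩
    have hmem : dIC (({i0} : Finset (Fin K)).card * M) N (∑ a ∈ ({i0} : Finset (Fin K)), D a)
        ((({i0} : Finset (Fin K)).card : ℝ) * r) ∈ {y : ℝ | ∃ A : Finset (Fin K), A.Nonempty ∧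
        y = dIC (A.card * M) N (∑ a ∈ A, D a) ((A.card : ℝ) * r)} :=
      ⟨{i0}, Finset.singleton_nonempty i0, rfl⟩
    have h1 := csInf_le hbdd hmem
    simp only [Finset.card_singleton, Finset.sum_singleton, Nat.cast_one, one_mul] at h1
    refine le_trans h1 ?_
    exact dIC_le_dFC M N hM hMN (D i0) r (hD i0).2 hr0 hrM
  -- membership of dFC
  have hmem : dFC M N r ∈ {x : ℝ | ∃ D : Fin K → ℝ,
        (∀ i, 0 ≤ D i ∧ D i ≤ (M : ℝ)) ∧
        (∑ i, D i) ≤ min (N : ℝ) ((K : ℝ) * (M : ℝ)) ∧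
        x = sInf {y : ℝ | ∃ A : Finset (Fin K), A.Nonempty ∧
              y = dIC (A.card * M) N (∑ a ∈ A, D a) ((A.card : ℝ) * r)}} := by
    rcases eq_or_lt_of_le hrM with hreq | hrlt
    · -- r = M : take D = 0
      refine ⟨fun _ => 0, fun i => ⟨le_refl 0, by positivity⟩, ?_, ?_⟩
      · simp only [Finset.sum_const, smul_zero]
        exact le_min (by positivity) (by positivity)
      · have hall : ∀ y ∈ {y : ℝ | ∃ A : Finset (Fin K), A.Nonempty ∧
            y = dIC (A.card * M) N (∑ a ∈ A, (fun _ => (0:ℝ)) a) ((A.card : ℝ) * r)}, y = 0 := by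
          rintro y ⟨A, hA, rfl⟩
          simp only [Finset.sum_const, smul_zero]
          rw [dIC, if_pos (Or.inl (le_refl 0))]
        have h0mem : (0:ℝ) ∈ {y : ℝ | ∃ A : Finset (Fin K), A.Nonempty ∧
            y = dIC (A.card * M) N (∑ a ∈ A, (fun _ => (0:ℝ)) a) ((A.card : ℝ) * r)} := by
          refine ⟨{i0}, Finset.singleton_nonempty i0, ?_⟩
          simp only [Finset.sum_const, smul_zero]
          rw [dIC, if_pos (Or.inl (le_refl 0))]
        have : sInf {y : ℝ | ∃ A : Finset (Fin K), A.Nonempty ∧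
            y = dIC (A.card * M) N (∑ a ∈ A, (fun _ => (0:ℝ)) a) ((A.card : ℝ) * r)} = 0 := by
          apply le_antisymm
          · exact csInf_le (by
              apply Set.Finite.bddBelow
              apply Set.Finite.subset (Set.finite_range
                (fun A : Finset (Fin K) => dIC (A.card * M) N (∑ a ∈ A, (fun _ => (0:ℝ)) a) ((A.card : ℝ) * r)))
              rintro y ⟨A, -, rfl⟩
              exact ⟨A, rfl⟩) h0mem
          · exact le_csInf ⟨0, h0mem⟩ (fun y hy => le_of_eq (hall y hy).symm)
        rw [this, hreq]
        have hfM : ⌊((M:ℕ):ℝ)⌋ = (M:ℤ) := Int.floor_natCast M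
        simp only [dFC, hfM]
        push_cast
        ring
    · -- r < M
      set l : ℕ := ⌊r⌋.toNat with hl
      have hfl0 : (0:ℤ) ≤ ⌊r⌋ := Int.floor_nonneg.mpr hr0
      have hlc : ((l:ℕ):ℝ) = ((⌊r⌋:ℤ):ℝ) := by
        rw [hl]; exact_mod_cast Int.toNat_of_nonneg hfl0
      have hlr : (l:ℝ) ≤ r := by rw [hlc]; exact Int.floor_le r
      have hrl : r < (l:ℝ) + 1 := by rw [hlc]; exact Int.lt_floor_add_one r
      have hlM : l + 1 ≤ M := by
        have : (l:ℝ) < M := lt_of_le_of_lt hlr hrlt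
        exact_mod_cast this
      have hlMr : (l:ℝ) + 1 ≤ M := by exact_mod_cast hlM
      have hMNr : (M:ℝ) ≤ N := by exact_mod_cast hMN
      have hd₁pos : (0:ℝ) < (N:ℝ)+(M:ℝ)-1-2*(l:ℝ) := by linarith
      set Dst : ℝ := ((M:ℝ)*(N:ℝ) - (l:ℝ)*((l:ℝ)+1))/((N:ℝ)+(M:ℝ)-1-2*(l:ℝ)) with hDst
      have hl1 : (l:ℝ) + 1 ≤ Dst := by
        rw [hDst, le_div_iff₀ hd₁pos]
        nlinarith [mul_nonneg (by linarith : (0:ℝ) ≤ (M:ℝ)-(l:ℝ)-1) (by linarith : (0:ℝ) ≤ (N:ℝ)-(l:ℝ)-1)]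
      have hDM : Dst ≤ (M:ℝ) := by
        rw [hDst, div_le_iff₀ hd₁pos]
        nlinarith [mul_nonneg (by linarith : (0:ℝ) ≤ (M:ℝ)-(l:ℝ)-1) (by linarith : (0:ℝ) ≤ (M:ℝ)-(l:ℝ))]
      have hDst0 : 0 ≤ Dst := by linarith
      clear_value Dst
      refine ⟨fun _ => Dst, fun i => ⟨hDst0, hDM⟩, ?_, ?_⟩
      · simp only [Finset.sum_const, Finset.card_univ, Fintype.card_fin, nsmul_eq_mul]
        refine le_min ?_ ?_
        · calc (K:ℝ) * Dst ≤ (K:ℝ) * M := by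
                exact mul_le_mul_of_nonneg_left hDM (by positivity)
            _ ≤ N := hKMr
        · exact mul_le_mul_of_nonneg_left hDM (by positivity)
      · -- dFC = sInf T
        have hlow : ∀ y ∈ {y : ℝ | ∃ A : Finset (Fin K), A.Nonempty ∧
            y = dIC (A.card * M) N (∑ a ∈ A, (fun _ => Dst) a) ((A.card : ℝ) * r)},
            dFC M N r ≤ y := by
          rintro y ⟨A, hA, rfl⟩
          have hk1 : 1 ≤ A.card := Finset.Nonempty.card_pos hA
          have hkK : A.card ≤ K := by
            have := Finset.card_le_univ A
            simpa using this
          have hsum : (∑ a ∈ A, (fun _ => Dst) a) = (A.card : ℝ) * Dst := by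
            simp [Finset.sum_const, nsmul_eq_mul]
          rw [hsum, hDst]
          exact key_low M N K A.card l hM hk1 hkK hK hlM hKMNr r hlr hrl
        have hy1 : dIC (({i0} : Finset (Fin K)).card * M) N
            (∑ a ∈ ({i0} : Finset (Fin K)), (fun _ => Dst) a)
            ((({i0} : Finset (Fin K)).card : ℝ) * r) ∈
            {y : ℝ | ∃ A : Finset (Fin K), A.Nonempty ∧
            y = dIC (A.card * M) N (∑ a ∈ A, (fun _ => Dst) a) ((A.card : ℝ) * r)} :=
          ⟨{i0}, Finset.singleton_nonempty i0, rfl⟩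
        have hbdd : BddBelow {y : ℝ | ∃ A : Finset (Fin K), A.Nonempty ∧
            y = dIC (A.card * M) N (∑ a ∈ A, (fun _ => Dst) a) ((A.card : ℝ) * r)} := by
          apply Set.Finite.bddBelow
          apply Set.Finite.subset (Set.finite_range
            (fun A : Finset (Fin K) => dIC (A.card * M) N (∑ a ∈ A, (fun _ => Dst) a) ((A.card : ℝ) * r)))
          rintro y ⟨A, -, rfl⟩
          exact ⟨A, rfl⟩
        apply le_antisymm
        · exact le_csInf ⟨_, hy1⟩ hlow
        · refine le_trans (csInf_le hbdd hy1) ?_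
          have h2 : dIC (({i0} : Finset (Fin K)).card * M) N
              (∑ a ∈ ({i0} : Finset (Fin K)), (fun _ => Dst) a)
              ((({i0} : Finset (Fin K)).card : ℝ) * r) = dIC M N Dst r := by
            simp only [Finset.card_singleton, Finset.sum_singleton, Nat.cast_one, one_mul]
          rw [h2]
          exact dIC_le_dFC M N hM hMN Dst r hDM hr0 hrM
  exact le_antisymm (csSup_le ⟨_, hmem⟩ hub) (le_csSup ⟨dFC M N r, hub⟩ hmem)
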